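/- Let 𝒜 be a nonempty set of infinite real matrices and ℬ the set of all row-mixtures of matrices in 𝒜 (each row of B ∈ ℬ is a row of some A ∈ 𝒜, with the same row index). Suppose x is a bounded real sequence lying in the domain of every A ∈ 𝒜, and for each B ∈ ℬ the sequence (B_n x) converges to some limit η_B. Then all the limits η_B are equal. -/

import Mathlib

open Filter

/-- The series `∑ k, a k` converges (partial sums) to `l`. -/
def SeriesConv (a : ℕ → ℝ) (l : ℝ) : Prop :=
  Tendsto (fun m => ∑ k ∈ Finset.range m, a k) atTop (nhds l)

/-- `B` is a row-mixture of the family `𝒜`. -/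
def RowMix (𝒜 : Set (ℕ → ℕ → ℝ)) (B : ℕ → ℕ → ℝ) : Prop :=
  ∀ n, ∃ A ∈ 𝒜, ∀ k, B n k = A n k

theorem stmt1 (𝒜 : Set (ℕ → ℕ → ℝ)) (h𝒜 : 𝒜.Nonempty)
    (x : ℕ → ℝ) (hx : ∃ C, ∀ n, |x n| ≤ C)
    (hdom : ∀ A ∈ 𝒜, ∀ n, ∃ l, SeriesConv (fun k => A n k * x k) l)
    (B B' : ℕ → ℕ → ℝ) (hB : RowMix 𝒜 B) (hB' : RowMix 𝒜 B')
    (T T' : ℕ → ℝ)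
    (hT : ∀ n, SeriesConv (fun k => B n k * x k) (T n))
    (hT' : ∀ n, SeriesConv (fun k => B' n k * x k) (T' n))
    (η η' : ℝ)
    (hconv : Tendsto T atTop (nhds η)) (hconv' : Tendsto T' atTop (nhds η'))
    (hall : ∀ C, RowMix 𝒜 C → ∀ U : ℕ → ℝ,
      (∀ n, SeriesConv (fun k => C n k * x k) (U n)) →
      ∃ ηC, Tendsto U atTop (nhds ηC)) :
    η = η' := by
  set C : ℕ → ℕ → ℝ := fun n k => if n % 2 = 0 then B n k else B' n k with hC
  set U : ℕ → ℝ := fun n => if n % 2 = 0 then T n else T' n with hU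
  have hCmix : RowMix 𝒜 C := by
    intro n
    by_cases h : n % 2 = 0
    · obtain ⟨A, hA, hAeq⟩ := hB n
      exact ⟨A, hA, fun k => by simp [hC, h, hAeq k]⟩
    · obtain ⟨A, hA, hAeq⟩ := hB' n
      exact ⟨A, hA, fun k => by simp [hC, h, hAeq k]⟩
  have hUconv : ∀ n, SeriesConv (fun k => C n k * x k) (U n) := by
    intro n
    by_cases h : n % 2 = 0 <;> simp [hC, hU, h, hT n, hT' n]
  obtain ⟨ηC, hηC⟩ := hall C hCmix U hUconv
  have h2 : Tendsto (fun m => 2 * m) atTop atTop :=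
    tendsto_atTop_mono (fun m => by simp; omega) tendsto_id
  have h2' : Tendsto (fun m => 2 * m + 1) atTop atTop :=
    tendsto_atTop_mono (fun m => by simp; omega) tendsto_id
  have heven : Tendsto (fun m => U (2 * m)) atTop (nhds ηC) := hηC.comp h2
  have hodd : Tendsto (fun m => U (2 * m + 1)) atTop (nhds ηC) := hηC.comp h2'
  have heven' : Tendsto (fun m => U (2 * m)) atTop (nhds η) := by
    have : (fun m => U (2 * m)) = fun m => T (2 * m) := by
      funext m; simp [hU, Nat.mul_mod_right]
    rw [this]; exact hconv.comp h2
  have hodd' : Tendsto (fun m => U (2 * m + 1)) atTop (nhds η') := by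
    have : (fun m => U (2 * m + 1)) = fun m => T' (2 * m + 1) := by
      funext m
      have h1 : (2 * m + 1) % 2 = 1 := by omega
      simp [hU, h1]
    rw [this]; exact hconv'.comp h2'
  rw [tendsto_nhds_unique heven' heven, tendsto_nhds_unique hodd' hodd]
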